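/- Let H be a Hilbert space and F : H → ℝ a convex, Gateaux-differentiable functional. For u ∈ H, define the unilateral slope |∂F|₊(u) = limsup over v → u with v ≥ u (in a partial order given by a closed convex cone) of [F(v) − F(u)]₋ / ‖v − u‖. Then |∂F|₊(u) = sup { −dF(u)[z] : z ≥ 0, ‖z‖ ≤ 1 }. -/

import Mathlib

open Filter

/-- Gradient inequality for convex functions along a ray. -/
lemma aux_grad_le {H : Type*} [NormedAddCommGroup H] [InnerProductSpace ℝ H]
    (F : H → ℝ) (hF : ConvexOn ℝ Set.univ F) (u z : H) (d : ℝ)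
    (hd : HasDerivAt (fun s : ℝ => F (u + s • z)) d 0) : d ≤ F (u + z) - F u := by
  set g : ℝ → ℝ := fun s => F (u + s • z) with hg_def
  have hg : ConvexOn ℝ Set.univ g := by
    refine ⟨convex_univ, fun x _ y _ a b ha hb hab => ?_⟩
    have h2 := hF.2 (Set.mem_univ (u + x • z)) (Set.mem_univ (u + y • z)) ha hb hab
    have key : a • (u + x • z) + b • (u + y • z) = u + (a • x + b • y) • z := by
      have h1 : a • (u + x • z) + b • (u + y • z) = (a + b) • u + (a * x + b * y) • z := by
        module
      rw [h1, hab, one_smul, smul_eq_mul, smul_eq_mul]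
    rw [key] at h2
    simpa [g, smul_eq_mul] using h2
  have hslope : Filter.Tendsto (slope g 0) (nhdsWithin 0 (Set.Ioi 0)) (nhds d) := by
    have h := hasDerivAt_iff_tendsto_slope.1 hd
    exact h.mono_left (nhdsWithin_mono _ (fun s hs => ne_of_gt hs))
  have hle : ∀ᶠ s in nhdsWithin (0:ℝ) (Set.Ioi 0), slope g 0 s ≤ slope g 0 1 := by
    filter_upwards [Ioo_mem_nhdsGT_of_mem (by norm_num : (0:ℝ) ∈ Set.Ico 0 1)] with s hs
    rw [slope_def_field, slope_def_field]
    exact hg.secant_mono (Set.mem_univ _) (Set.mem_univ _) (Set.mem_univ _)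
      (ne_of_gt hs.1) one_ne_zero hs.2.le
  have hfinal : d ≤ slope g 0 1 := le_of_tendsto hslope hle
  rw [slope_def_field] at hfinal
  simpa [g] using hfinal

theorem unilateral_slope_eq_sup_of_convex
    {H : Type*} [NormedAddCommGroup H] [InnerProductSpace ℝ H] [CompleteSpace H]
    (C : Set H) (hC_closed : IsClosed C) (hC_convex : Convex ℝ C)
    (hC_cone : ∀ c : ℝ, 0 ≤ c → ∀ x ∈ C, c • x ∈ C)
    (F : H → ℝ) (hF : ConvexOn ℝ Set.univ F)
    (dF : H → H →L[ℝ] ℝ)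
    (hdF : ∀ u z : H, HasDerivAt (fun s : ℝ => F (u + s • z)) (dF u z) 0)
    (u : H) :
    Filter.limsup (fun v => ENNReal.ofReal (max (-(F v - F u)) 0 / ‖v - u‖))
        (nhdsWithin u {v : H | v - u ∈ C ∧ v ≠ u}) =
      ⨆ z ∈ {z : H | z ∈ C ∧ ‖z‖ ≤ 1}, ENNReal.ofReal (-(dF u z)) := by
  set f : H → ENNReal := fun v => ENNReal.ofReal (max (-(F v - F u)) 0 / ‖v - u‖) with hf_def
  set S : Set H := {v : H | v - u ∈ C ∧ v ≠ u} with hS_def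
  have hofReal_max : ∀ a : ℝ, ENNReal.ofReal (max a 0) = ENNReal.ofReal a := by
    intro a
    rcases le_total a 0 with h | h
    · rw [max_eq_right h, ENNReal.ofReal_zero, eq_comm, ENNReal.ofReal_eq_zero.2 h]
    · rw [max_eq_left h]
  apply le_antisymm
  · -- limsup ≤ sup
    refine Filter.limsup_le_of_le (by isBoundedDefault) ?_
    filter_upwards [self_mem_nhdsWithin] with v hv
    obtain ⟨hvC, hvne⟩ := hv
    have hnorm : (0:ℝ) < ‖v - u‖ := by
      rw [norm_pos_iff, sub_ne_zero]; exact hvne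
    have hkey : dF u (v - u) ≤ F v - F u := by
      have h := aux_grad_le F hF u (v - u) (dF u (v - u)) (hdF u (v - u))
      simpa using h
    set z' : H := ‖v - u‖⁻¹ • (v - u) with hz'_def
    have hz'C : z' ∈ C := hC_cone _ (by positivity) _ hvC
    have hz'n : ‖z'‖ ≤ 1 := by
      rw [hz'_def, norm_smul, norm_inv, norm_norm, inv_mul_cancel₀ (ne_of_gt hnorm)]
    have hdz' : dF u z' = ‖v - u‖⁻¹ * dF u (v - u) := by
      rw [hz'_def, map_smul, smul_eq_mul]
    have hreal : max (-(F v - F u)) 0 / ‖v - u‖ ≤ max (-(dF u z')) 0 := by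
      have h1 : max (-(F v - F u)) 0 / ‖v - u‖ ≤ max (-(dF u (v - u))) 0 / ‖v - u‖ := by
        gcongr
      refine h1.trans_eq ?_
      rw [← max_div_div_right hnorm.le, zero_div, hdz']
      congr 1
      ring
    calc f v ≤ ENNReal.ofReal (max (-(dF u z')) 0) := ENNReal.ofReal_le_ofReal hreal
      _ = ENNReal.ofReal (-(dF u z')) := hofReal_max _
      _ ≤ ⨆ z ∈ {z : H | z ∈ C ∧ ‖z‖ ≤ 1}, ENNReal.ofReal (-(dF u z)) :=
        le_iSup₂ (f := fun z _ => ENNReal.ofReal (-(dF u z))) z' ⟨hz'C, hz'n⟩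
  · -- sup ≤ limsup
    refine iSup₂_le fun z hz => ?_
    obtain ⟨hzC, hzn⟩ := hz
    rcases le_or_gt 0 (dF u z) with hd | hd
    · rw [ENNReal.ofReal_of_nonpos (neg_nonpos.2 hd)]
      exact zero_le
    · have hz0 : z ≠ 0 := by
        rintro rfl; simp at hd
      have hzpos : (0:ℝ) < ‖z‖ := norm_pos_iff.2 hz0
      set m : ℝ → H := fun s => u + s • z with hm_def
      have htend_m : Filter.Tendsto m (nhdsWithin 0 (Set.Ioi 0)) (nhdsWithin u S) := by
        rw [tendsto_nhdsWithin_iff]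
        constructor
        · have hcont : Filter.Tendsto m (nhds 0) (nhds u) := by
            have : Continuous m := by continuity
            have h0 : m 0 = u := by simp [hm_def]
            simpa [h0] using this.tendsto 0
          exact hcont.mono_left nhdsWithin_le_nhds
        · filter_upwards [self_mem_nhdsWithin] with s hs
          have hs : (0:ℝ) < s := hs
          constructor
          · have : m s - u = s • z := by simp [hm_def]
            rw [this]; exact hC_cone s hs.le z hzC
          · simp only [hm_def, ne_eq, add_eq_left]
            exact smul_ne_zero (ne_of_gt hs) hz0
      -- limit of f ∘ m
      have hgd : Filter.Tendsto (fun s : ℝ => (F (u + s • z) - F u) / s)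
          (nhdsWithin 0 (Set.Ioi 0)) (nhds (dF u z)) := by
        have h := hasDerivAt_iff_tendsto_slope.1 (hdF u z)
        have h2 := h.mono_left (nhdsWithin_mono (0:ℝ) (fun s hs => ne_of_gt hs))
        refine h2.congr fun s => ?_
        rw [slope_def_field]
        simp
      have h1 : Filter.Tendsto (fun s : ℝ => max (-((F (u + s • z) - F u) / s)) 0 / ‖z‖)
          (nhdsWithin 0 (Set.Ioi 0)) (nhds (max (-(dF u z)) 0 / ‖z‖)) :=
        ((hgd.neg.max tendsto_const_nhds).div_const _)
      have heq : ∀ᶠ s in nhdsWithin (0:ℝ) (Set.Ioi 0),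
          max (-((F (u + s • z) - F u) / s)) 0 / ‖z‖
            = max (-(F (m s) - F u)) 0 / ‖m s - u‖ := by
        filter_upwards [self_mem_nhdsWithin] with s hs
        have hs : (0:ℝ) < s := hs
        have hnm : ‖m s - u‖ = s * ‖z‖ := by
          simp [hm_def, norm_smul, abs_of_pos hs]
        have hx : max (-((F (u + s • z) - F u) / s)) 0 = max (-(F (u + s • z) - F u)) 0 / s := by
          rw [← neg_div, ← max_div_div_right hs.le, zero_div]
        rw [hx, div_div, ← hnm]
      have h2 : Filter.Tendsto (fun s => max (-(F (m s) - F u)) 0 / ‖m s - u‖)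
          (nhdsWithin 0 (Set.Ioi 0)) (nhds (max (-(dF u z)) 0 / ‖z‖)) := h1.congr' heq
      have hfm : Filter.Tendsto (fun s => f (m s)) (nhdsWithin 0 (Set.Ioi 0))
          (nhds (ENNReal.ofReal (max (-(dF u z)) 0 / ‖z‖))) :=
        (ENNReal.continuous_ofReal.tendsto _).comp h2
      have hlim : ENNReal.ofReal (max (-(dF u z)) 0 / ‖z‖) ≤
          Filter.limsup f (nhdsWithin u S) := by
        have e1 : Filter.limsup (fun s => f (m s)) (nhdsWithin (0:ℝ) (Set.Ioi 0)) =
            ENNReal.ofReal (max (-(dF u z)) 0 / ‖z‖) := hfm.limsup_eq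
        have e2 : Filter.limsup (fun s => f (m s)) (nhdsWithin (0:ℝ) (Set.Ioi 0)) =
            Filter.limsup f (Filter.map m (nhdsWithin (0:ℝ) (Set.Ioi 0))) := by
          rw [Filter.limsup, Filter.limsup, Filter.map_map]
          rfl
        rw [← e1, e2]
        exact Filter.limsup_le_limsup_of_le htend_m
      refine le_trans ?_ hlim
      apply ENNReal.ofReal_le_ofReal
      calc -(dF u z) ≤ max (-(dF u z)) 0 := le_max_left _ _
        _ ≤ max (-(dF u z)) 0 / ‖z‖ := le_div_self (le_max_right _ _) hzpos hzn
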